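/- arXiv:0803.2643 — 2 statements merged into one kernel-verified Lean document; each statement's English description precedes it below -/
import Mathlib

section
/- Asymptotic unitarity forces the Lindblad form of the zeroth block: let d ≥ 1, m ≥ 2, and for each n ∈ ℕ let U(n) be a unitary (m·d)×(m·d) complex matrix with m×m block decomposition (L_{ij}(n))_{0≤i,j≤m−1} into d×d blocks. Assume that n·(L_{00}(n) − I) converges to a matrix G and that √n·L_{i0}(n) converges to a matrix L_i for each i = 1,…,m−1 (convergence in norm). Then G + G* + Σ_{i=1}^{m−1} L_i*·L_i = 0; equivalently, setting H = (i/2)·(G − G*), the matrix H is self-adjoint and G = −i·H − (1/2)·Σ_{i=1}^{m−1} L_i*·L_i. -/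
open Matrix Filter
open scoped ComplexOrder

/-- The `(i,j)` block (a `d×d` matrix) of an `(m·d)×(m·d)` matrix, under the Kronecker
identification of `ℂ^m ⊗ ℂ^d` with `ℂ^{m·d}` (first factor slow). -/
def blockOf {m d : ℕ} (A : Matrix (Fin m × Fin d) (Fin m × Fin d) ℂ) (i j : Fin m) :
    Matrix (Fin d) (Fin d) ℂ :=
  Matrix.of fun a b => A (i, a) (j, b)

/-- Asymptotic unitarity forces the Lindblad form of the zeroth block: if `U(n)` are unitary
with blocks `L_{ij}(n)`, `n·(L₀₀(n) − I) → G` and `√n·L_{i0}(n) → L_i` for `i ≠ 0`, then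
`G + G* + Σ_{i≠0} L_i*·L_i = 0`; equivalently, `H := (i/2)·(G − G*)` is self-adjoint and
`G = −i·H − (1/2)·Σ_{i≠0} L_i*·L_i`. -/
theorem asymptotic_unitarity_lindblad_form (d m : ℕ) [NeZero m] (hd : 1 ≤ d) (hm : 2 ≤ m)
    (U : ℕ → Matrix (Fin m × Fin d) (Fin m × Fin d) ℂ)
    (hU : ∀ n, U n ∈ Matrix.unitaryGroup (Fin m × Fin d) ℂ)
    (G : Matrix (Fin d) (Fin d) ℂ) (L : Fin m → Matrix (Fin d) (Fin d) ℂ)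
    (hG : Tendsto (fun n : ℕ => (n : ℂ) • (blockOf (U n) 0 0 - 1)) atTop (nhds G))
    (hL : ∀ i : Fin m, i ≠ 0 →
      Tendsto (fun n : ℕ => ((Real.sqrt n : ℝ) : ℂ) • blockOf (U n) i 0) atTop (nhds (L i))) :
    G + Gᴴ + ∑ i ∈ Finset.univ.erase (0 : Fin m), (L i)ᴴ * L i = 0
    ∧ ((Complex.I / 2) • (G - Gᴴ))ᴴ = (Complex.I / 2) • (G - Gᴴ)
    ∧ G = (-Complex.I) • ((Complex.I / 2) • (G - Gᴴ))
          - (1 / 2 : ℂ) • ∑ i ∈ Finset.univ.erase (0 : Fin m), (L i)ᴴ * L i := by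
  classical
  set A : ℕ → Matrix (Fin d) (Fin d) ℂ :=
    fun n => (n : ℂ) • (blockOf (U n) 0 0 - 1) with hAdef
  set B : Fin m → ℕ → Matrix (Fin d) (Fin d) ℂ :=
    fun i n => ((Real.sqrt n : ℝ) : ℂ) • blockOf (U n) i 0 with hBdef
  -- unitarity on the zeroth block column
  have key : ∀ n, ∑ k : Fin m, (blockOf (U n) k 0)ᴴ * blockOf (U n) k 0 = 1 := by
    intro n
    have h : star (U n) * U n = 1 := ((Unitary.mem_iff).1 (hU n)).1
    ext a b
    have h2 := congrFun (congrFun h ((0 : Fin m), a)) ((0 : Fin m), b)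
    simp only [Matrix.mul_apply, Matrix.star_apply, Fintype.sum_prod_type,
      Matrix.one_apply, Prod.mk.injEq] at h2
    simp only [Matrix.sum_apply, Matrix.mul_apply, Matrix.conjTranspose_apply,
      blockOf, Matrix.of_apply, Matrix.one_apply]
    simpa using h2
  -- exact identity at each n
  have ident : ∀ n : ℕ,
      ∑ i ∈ Finset.univ.erase (0 : Fin m), (B i n)ᴴ * B i n
        = -(A n + (A n)ᴴ + ((1 : ℂ)/n) • ((A n)ᴴ * A n)) := by
    intro n
    rcases eq_or_ne n 0 with rfl | hn
    · simp [hAdef, hBdef]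
    have hn' : ((n : ℂ)) ≠ 0 := Nat.cast_ne_zero.2 hn
    have hs : (((Real.sqrt n : ℝ) : ℂ)) * ((Real.sqrt n : ℝ) : ℂ) = (n : ℂ) := by
      rw [← Complex.ofReal_mul, Real.mul_self_sqrt (Nat.cast_nonneg n)]
      push_cast; ring
    have hBsq : ∀ i : Fin m,
        (B i n)ᴴ * B i n = (n : ℂ) • ((blockOf (U n) i 0)ᴴ * blockOf (U n) i 0) := by
      intro i
      simp only [hBdef, Matrix.conjTranspose_smul, Complex.star_def, Complex.conj_ofReal,
        Matrix.smul_mul, Matrix.mul_smul, smul_smul, hs]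
    -- sum over erase
    have hsum : ∑ i ∈ Finset.univ.erase (0 : Fin m),
        (blockOf (U n) i 0)ᴴ * blockOf (U n) i 0
        = 1 - (blockOf (U n) 0 0)ᴴ * blockOf (U n) 0 0 := by
      have := key n
      rw [← Finset.add_sum_erase _ _ (Finset.mem_univ (0 : Fin m))] at this
      linear_combination (norm := module) this
    set E := blockOf (U n) 0 0 - 1 with hE
    have hE0 : blockOf (U n) 0 0 = E + 1 := by simp [hE]
    have hA' : A n = (n : ℂ) • E := rfl
    have hAH : (A n)ᴴ = (n : ℂ) • Eᴴ := by
      simp [hA', Matrix.conjTranspose_smul]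
    calc ∑ i ∈ Finset.univ.erase (0 : Fin m), (B i n)ᴴ * B i n
        = (n : ℂ) • ∑ i ∈ Finset.univ.erase (0 : Fin m),
            (blockOf (U n) i 0)ᴴ * blockOf (U n) i 0 := by
          rw [Finset.smul_sum]; exact Finset.sum_congr rfl fun i _ => hBsq i
      _ = (n : ℂ) • (1 - (E + 1)ᴴ * (E + 1)) := by rw [hsum, hE0]
      _ = -(A n + (A n)ᴴ + ((1 : ℂ)/n) • ((A n)ᴴ * A n)) := by
          rw [hA', hAH]
          simp only [Matrix.smul_mul, Matrix.mul_smul, smul_smul,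
            Matrix.conjTranspose_add, Matrix.conjTranspose_one,
            Matrix.add_mul, Matrix.mul_add, Matrix.one_mul, Matrix.mul_one]
          have hc : (1 : ℂ) / n * ((n : ℂ) * n) = (n : ℂ) := by field_simp
          rw [hc]
          module
  -- limits
  have hcH : Continuous fun M : Matrix (Fin d) (Fin d) ℂ => Mᴴ :=
    continuous_id.matrix_conjTranspose
  have hGH : Tendsto (fun n => (A n)ᴴ) atTop (nhds Gᴴ) := (hcH.tendsto G).comp hG
  have hprod : Tendsto (fun n => (A n)ᴴ * A n) atTop (nhds (Gᴴ * G)) := by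
    have hc : Continuous fun M : Matrix (Fin d) (Fin d) ℂ => Mᴴ * M :=
      (continuous_id.matrix_conjTranspose).matrix_mul continuous_id
    exact (hc.tendsto G).comp hG
  have hinv : Tendsto (fun n : ℕ => (1 : ℂ)/n) atTop (nhds 0) := by
    have : Tendsto (fun n : ℕ => ((1/n : ℝ) : ℂ)) atTop (nhds ((0 : ℝ) : ℂ)) :=
      (Complex.continuous_ofReal.tendsto 0).comp tendsto_one_div_atTop_nhds_zero_nat
    simpa [Complex.ofReal_div] using this
  have hsmall : Tendsto (fun n : ℕ => ((1 : ℂ)/n) • ((A n)ᴴ * A n)) atTop (nhds 0) := by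
    have := hinv.smul hprod
    simpa using this
  have hRHS : Tendsto (fun n => -(A n + (A n)ᴴ + ((1 : ℂ)/n) • ((A n)ᴴ * A n)))
      atTop (nhds (-(G + Gᴴ))) := by
    have := ((hG.add hGH).add hsmall).neg
    simpa using this
  have hLHS : Tendsto (fun n => ∑ i ∈ Finset.univ.erase (0 : Fin m), (B i n)ᴴ * B i n)
      atTop (nhds (∑ i ∈ Finset.univ.erase (0 : Fin m), (L i)ᴴ * L i)) := by
    refine tendsto_finset_sum _ fun i hi => ?_
    have hi0 : i ≠ 0 := Finset.ne_of_mem_erase hi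
    have hc : Continuous fun M : Matrix (Fin d) (Fin d) ℂ => Mᴴ * M :=
      (continuous_id.matrix_conjTranspose).matrix_mul continuous_id
    exact (hc.tendsto (L i)).comp (hL i hi0)
  have hmain : ∑ i ∈ Finset.univ.erase (0 : Fin m), (L i)ᴴ * L i = -(G + Gᴴ) := by
    refine tendsto_nhds_unique ?_ hRHS
    exact (funext ident : (fun n => ∑ i ∈ Finset.univ.erase (0 : Fin m), (B i n)ᴴ * B i n)
      = _) ▸ hLHS
  have h0 : G + Gᴴ + ∑ i ∈ Finset.univ.erase (0 : Fin m), (L i)ᴴ * L i = 0 := by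
    rw [hmain]; abel
  refine ⟨h0, ?_, ?_⟩
  · simp only [Matrix.conjTranspose_smul, Matrix.conjTranspose_sub,
      Matrix.conjTranspose_conjTranspose, Complex.star_def, map_div₀, Complex.conj_I,
      map_ofNat]
    module
  · rw [hmain]
    have hc : (-Complex.I) * (Complex.I/2) = 1/2 := by
      linear_combination (-1/2 : ℂ) * Complex.I_sq
    rw [smul_smul, hc]
    module
end

section
/- Finite-horizon dynamic programming for discrete controlled quantum trajectories: define the value functions by backward recursion V^N(ρ) = φ(ρ) and V^k(ρ) = min_{u∈𝒰} { c(k, ρ, u) + t₀(k,u,ρ)·V^{k+1}(H₀(k,u,ρ)) + t₁(k,u,ρ)·V^{k+1}(H₁(k,u,ρ)) } for 0 ≤ k ≤ N−1 (each V^k is continuous on S and the minimum is attained). Then (i) for every history-dependent strategy u, V^0(ρ) ≤ J_u^0(∅, ρ), i.e. V^0(ρ) is a lower bound for the expected total cost of every strategy; and (ii) there exist functions u*_k : S → 𝒰 with u*_k(ρ) ∈ argmin of the Bellman expression at step k, such that the Markovian strategy which at step k on history w applies u*_k to the current state achieves J_{u*}^0(∅, ρ) = V^0(ρ). Hence V^0(ρ)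 equals the minimum of the expected cost over all strategies, and the minimum is attained by a Markovian strategy. -/
open Matrix
open scoped ComplexOrder

/-- A state (density matrix): a positive semidefinite complex matrix of trace 1. -/
def IsState {n : Type*} [Fintype n] (ρ : Matrix n n ℂ) : Prop :=
  ρ.PosSemidef ∧ ρ.trace = 1

/-- Transition probability `t(L, ρ) = Tr[L·ρ·L*]` (real part of the trace). -/
noncomputable def transProb (L ρ : Matrix (Fin 2) (Fin 2) ℂ) : ℝ :=
  ((L * ρ * Lᴴ).trace).re

/-- Post-measurement state `H(L, ρ) = L·ρ·L* / Tr[L·ρ·L*]`. -/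
noncomputable def postState (L ρ : Matrix (Fin 2) (Fin 2) ℂ) : Matrix (Fin 2) (Fin 2) ℂ :=
  ((L * ρ * Lᴴ).trace)⁻¹ • (L * ρ * Lᴴ)

/-- The expected total cost `J_u^k(w, ρ)` of a history-dependent strategy, by backward
recursion; the first argument is the number `N − k` of remaining steps, the second is the
current stage `k`, the third the binary history `w`, the fourth the current state. -/
noncomputable def expCost {𝒰 : Type*} (L0 L1 : ℕ → 𝒰 → Matrix (Fin 2) (Fin 2) ℂ)
    (c : ℕ → Matrix (Fin 2) (Fin 2) ℂ → 𝒰 → ℝ) (φ : Matrix (Fin 2) (Fin 2) ℂ → ℝ)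
    (strat : ℕ → List Bool → 𝒰) :
    ℕ → ℕ → List Bool → Matrix (Fin 2) (Fin 2) ℂ → ℝ
  | 0, _, _, ρ => φ ρ
  | n + 1, k, w, ρ =>
      c k ρ (strat k w)
        + transProb (L0 k (strat k w)) ρ *
            expCost L0 L1 c φ strat n (k + 1) (w ++ [false]) (postState (L0 k (strat k w)) ρ)
        + transProb (L1 k (strat k w)) ρ *
            expCost L0 L1 c φ strat n (k + 1) (w ++ [true]) (postState (L1 k (strat k w)) ρ)

/-- The state reached from `ρ` at stage `k` along the binary history `w` when a Markovian
policy `pol` is applied. -/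
noncomputable def evolveState {𝒰 : Type*} (L0 L1 : ℕ → 𝒰 → Matrix (Fin 2) (Fin 2) ℂ)
    (pol : ℕ → Matrix (Fin 2) (Fin 2) ℂ → 𝒰) :
    ℕ → List Bool → Matrix (Fin 2) (Fin 2) ℂ → Matrix (Fin 2) (Fin 2) ℂ
  | _, [], ρ => ρ
  | k, i :: w, ρ =>
      evolveState L0 L1 pol (k + 1) w (postState ((if i then L1 k else L0 k) (pol k ρ)) ρ)

/-- The Bellman expression `c(k,ρ,u) + Σ_i t_i(k,u,ρ)·V^{k+1}(H_i(k,u,ρ))`. -/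
noncomputable def bellman {𝒰 : Type*} (L0 L1 : ℕ → 𝒰 → Matrix (Fin 2) (Fin 2) ℂ)
    (c : ℕ → Matrix (Fin 2) (Fin 2) ℂ → 𝒰 → ℝ)
    (Vnext : Matrix (Fin 2) (Fin 2) ℂ → ℝ)
    (k : ℕ) (ρ : Matrix (Fin 2) (Fin 2) ℂ) (u : 𝒰) : ℝ :=
  c k ρ u + transProb (L0 k u) ρ * Vnext (postState (L0 k u) ρ)
    + transProb (L1 k u) ρ * Vnext (postState (L1 k u) ρ)


lemma trace_real_to_transProb {L ρ : Matrix (Fin 2) (Fin 2) ℂ} (hρ : ρ.PosSemidef) :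
    (L * ρ * Lᴴ).trace = ((transProb L ρ : ℝ) : ℂ) := by
  have hA : (L * ρ * Lᴴ).PosSemidef := hρ.mul_mul_conjTranspose_same L
  have h : star (L * ρ * Lᴴ).trace = (L * ρ * Lᴴ).trace := by
    rw [← Matrix.trace_conjTranspose, hA.1.eq]
  have him : ((L * ρ * Lᴴ).trace).im = 0 := Complex.conj_eq_iff_im.mp h
  exact Complex.ext rfl (by simp [him, transProb])

lemma isState_postState {L ρ : Matrix (Fin 2) (Fin 2) ℂ} (hρ : IsState ρ)
    (ht : 0 < transProb L ρ) : IsState (postState L ρ) := by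
  have hA : (L * ρ * Lᴴ).PosSemidef := hρ.1.mul_mul_conjTranspose_same L
  have htr : (L * ρ * Lᴴ).trace = ((transProb L ρ : ℝ) : ℂ) := trace_real_to_transProb hρ.1
  set t : ℝ := transProb L ρ with htdef
  have htne : (t : ℂ) ≠ 0 := by exact_mod_cast ne_of_gt (by exact_mod_cast ht)
  refine ⟨⟨?_, ?_⟩, ?_⟩
  · unfold postState
    rw [htr]
    unfold Matrix.IsHermitian
    rw [Matrix.conjTranspose_smul, hA.1.eq]
    congr 1
    simp [← Complex.ofReal_inv]
  · intro x
    unfold postState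
    rw [htr, ← Complex.ofReal_inv]
    have h1 : (0:ℂ) ≤ ((t⁻¹ : ℝ) : ℂ) := by
      rw [Complex.zero_le_real]; positivity
    convert mul_nonneg h1 (hA.2 x) using 1
    simp only [Matrix.smul_apply, smul_eq_mul, Finsupp.mul_sum]
    exact Finsupp.sum_congr fun i _ => Finsupp.sum_congr fun j _ => by ring
  · unfold postState
    rw [Matrix.trace_smul, htr, smul_eq_mul, inv_mul_cancel₀ htne]

lemma evolveState_append {𝒰 : Type*} (L0 L1 : ℕ → 𝒰 → Matrix (Fin 2) (Fin 2) ℂ)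
    (pol : ℕ → Matrix (Fin 2) (Fin 2) ℂ → 𝒰) :
    ∀ (w1 w2 : List Bool) (k : ℕ) (ρ : Matrix (Fin 2) (Fin 2) ℂ),
      evolveState L0 L1 pol k (w1 ++ w2) ρ
        = evolveState L0 L1 pol (k + w1.length) w2 (evolveState L0 L1 pol k w1 ρ)
  | [], w2, k, ρ => by simp [evolveState]
  | i :: w1, w2, k, ρ => by
      have hlen : k + (i :: w1).length = (k + 1) + w1.length := by
        simp [List.length_cons]; omega
      simp only [List.cons_append, evolveState, hlen]
      exact evolveState_append L0 L1 pol w1 w2 (k + 1) _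

lemma evolveState_snoc {𝒰 : Type*} (L0 L1 : ℕ → 𝒰 → Matrix (Fin 2) (Fin 2) ℂ)
    (pol : ℕ → Matrix (Fin 2) (Fin 2) ℂ → 𝒰) (w : List Bool) (i : Bool) (k : ℕ)
    (ρ : Matrix (Fin 2) (Fin 2) ℂ) :
    evolveState L0 L1 pol k (w ++ [i]) ρ
      = postState ((if i then L1 (k + w.length) else L0 (k + w.length))
          (pol (k + w.length) (evolveState L0 L1 pol k w ρ)))
          (evolveState L0 L1 pol k w ρ) := by
  rw [evolveState_append]
  simp [evolveState]

/-- Finite-horizon dynamic programming for discrete controlled quantum trajectories: the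
value functions defined by the backward Bellman recursion bound from below the expected cost
of every history-dependent strategy, and the bound is attained by a Markovian strategy built
from pointwise minimizers of the Bellman expression. -/
theorem finite_horizon_dynamic_programming {𝒰 : Type*} [TopologicalSpace 𝒰]
    [CompactSpace 𝒰] [TopologicalSpace.MetrizableSpace 𝒰] [Nonempty 𝒰]
    (N : ℕ)
    (L0 L1 : ℕ → 𝒰 → Matrix (Fin 2) (Fin 2) ℂ)
    (hL0c : ∀ k, Continuous (L0 k)) (hL1c : ∀ k, Continuous (L1 k))
    (hconstraint : ∀ k u, (L0 k u)ᴴ * L0 k u + (L1 k u)ᴴ * L1 k u = 1)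
    (hpos : ∀ k u ρ, IsState ρ → 0 < transProb (L0 k u) ρ ∧ 0 < transProb (L1 k u) ρ)
    (c : ℕ → Matrix (Fin 2) (Fin 2) ℂ → 𝒰 → ℝ)
    (hc : ∀ k, Continuous fun p : Matrix (Fin 2) (Fin 2) ℂ × 𝒰 => c k p.1 p.2)
    (φ : Matrix (Fin 2) (Fin 2) ℂ → ℝ) (hφ : Continuous φ)
    (V : ℕ → Matrix (Fin 2) (Fin 2) ℂ → ℝ)
    (hVcont : ∀ k, ContinuousOn (V k) {ρ | IsState ρ})
    (hVN : ∀ ρ, V N ρ = φ ρ)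
    (hVleast : ∀ k, k < N → ∀ ρ, IsState ρ →
      IsLeast (Set.range (bellman L0 L1 c (V (k + 1)) k ρ)) (V k ρ)) :
    (∀ strat : ℕ → List Bool → 𝒰, ∀ ρ, IsState ρ →
        V 0 ρ ≤ expCost L0 L1 c φ strat N 0 [] ρ)
    ∧ ∃ ustar : ℕ → Matrix (Fin 2) (Fin 2) ℂ → 𝒰,
        (∀ k, k < N → ∀ ρ, IsState ρ →
          bellman L0 L1 c (V (k + 1)) k ρ (ustar k ρ) = V k ρ)
        ∧ ∀ ρ, IsState ρ →
            expCost L0 L1 c φ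
              (fun k w => ustar k (evolveState L0 L1 ustar 0 w ρ)) N 0 [] ρ = V 0 ρ := by
  -- Part 1: lower bound
  have key1 : ∀ n k, n + k = N → ∀ (strat : ℕ → List Bool → 𝒰) (w : List Bool) ρ,
      IsState ρ → V k ρ ≤ expCost L0 L1 c φ strat n k w ρ := by
    intro n
    induction n with
    | zero =>
      intro k hk strat w ρ hρ
      have : k = N := by omega
      subst this
      simp [expCost, hVN]
    | succ n ih =>
      intro k hk strat w ρ hρ
      have hkN : k < N := by omega
      have hb : V k ρ ≤ bellman L0 L1 c (V (k + 1)) k ρ (strat k w) :=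
        (hVleast k hkN ρ hρ).2 ⟨strat k w, rfl⟩
      refine le_trans hb ?_
      have h0 := (hpos k (strat k w) ρ hρ).1
      have h1 := (hpos k (strat k w) ρ hρ).2
      have i0 := ih (k + 1) (by omega) strat (w ++ [false]) _ (isState_postState hρ h0)
      have i1 := ih (k + 1) (by omega) strat (w ++ [true]) _ (isState_postState hρ h1)
      show bellman L0 L1 c (V (k + 1)) k ρ (strat k w) ≤ _
      unfold bellman
      simp only [expCost]
      exact add_le_add (add_le_add le_rfl (mul_le_mul_of_nonneg_left i0 h0.le))
        (mul_le_mul_of_nonneg_left i1 h1.le)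
  -- Part 2: optimal Markovian policy
  have hchoice : ∀ k ρ, ∃ u : 𝒰, k < N → IsState ρ →
      bellman L0 L1 c (V (k + 1)) k ρ u = V k ρ := by
    intro k ρ
    by_cases h : k < N ∧ IsState ρ
    · obtain ⟨u, hu⟩ := (hVleast k h.1 ρ h.2).1
      exact ⟨u, fun _ _ => hu⟩
    · exact ⟨Classical.arbitrary 𝒰, fun h1 h2 => absurd ⟨h1, h2⟩ h⟩
  choose ustar hustar using hchoice
  refine ⟨fun strat ρ hρ => key1 N 0 (by omega) strat [] ρ hρ, ustar,
    fun k hk ρ hρ => hustar k ρ hk hρ, ?_⟩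
  have key2 : ∀ n k (w : List Bool) (ρ0 ρ : Matrix (Fin 2) (Fin 2) ℂ),
      n + k = N → k = w.length → IsState ρ → evolveState L0 L1 ustar 0 w ρ0 = ρ →
      expCost L0 L1 c φ (fun k' w' => ustar k' (evolveState L0 L1 ustar 0 w' ρ0)) n k w ρ
        = V k ρ := by
    intro n
    induction n with
    | zero =>
      intro k w ρ0 ρ hk hw hρ hev
      have : k = N := by omega
      subst this
      simp [expCost, hVN]
    | succ n ih =>
      intro k w ρ0 ρ hk hw hρ hev
      have hkN : k < N := by omega
      have h0 := (hpos k (ustar k ρ) ρ hρ).1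
      have h1 := (hpos k (ustar k ρ) ρ hρ).2
      have hev0 : evolveState L0 L1 ustar 0 (w ++ [false]) ρ0
          = postState (L0 k (ustar k ρ)) ρ := by
        rw [evolveState_snoc]
        simp only [if_false, Bool.false_eq_true, Nat.zero_add, ← hw, hev]
      have hev1 : evolveState L0 L1 ustar 0 (w ++ [true]) ρ0
          = postState (L1 k (ustar k ρ)) ρ := by
        rw [evolveState_snoc]
        simp only [if_true, Nat.zero_add, ← hw, hev]
      have i0 := ih (k + 1) (w ++ [false]) ρ0 _ (by omega) (by simp [hw])
        (isState_postState hρ h0) hev0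
      have i1 := ih (k + 1) (w ++ [true]) ρ0 _ (by omega) (by simp [hw])
        (isState_postState hρ h1) hev1
      simp only [expCost, hev, i0, i1]
      exact hustar k ρ hkN hρ
  intro ρ hρ
  exact key2 N 0 [] ρ ρ (by omega) rfl hρ rfl
end
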